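/- Let ρ > 0 and T > 0. Then ∫_{ℝ^2 ∖ [0,T]^2} f_2(x_1, x_2)^2 dx_1 dx_2 ≤ 1/ρ^2, where the integral over the complement of the square [0,T]^2 is with respect to two-dimensional Lebesgue measure. -/

import Mathlib

open Real MeasureTheory ENNReal

/-- The second chaos kernel of the quadratic functional of the Ornstein–Uhlenbeck Lévy
process. -/
noncomputable def ouKernel (ρ T x₁ x₂ : ℝ) : ℝ :=
  (if x₁ ≤ T then (1 : ℝ) else 0) * (if x₂ ≤ T then (1 : ℝ) else 0) *
    Real.exp (ρ * (x₁ + x₂)) *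
    ((1 - Real.exp (-2 * ρ * T)) * (if max x₁ x₂ ≤ 0 then (1 : ℝ) else 0) +
      (Real.exp (-2 * ρ * max x₁ x₂) - Real.exp (-2 * ρ * T)) *
        (if 0 < max x₁ x₂ then (1 : ℝ) else 0))

/-- Pointwise bound on the complement of the square. -/
lemma ouKernel_sq_le (ρ T x y : ℝ) (hρ : 0 < ρ) (hT : 0 < T)
    (h : ¬ (x ∈ Set.Icc (0:ℝ) T ∧ y ∈ Set.Icc (0:ℝ) T)) :
    (ouKernel ρ T x y) ^ 2 ≤ Real.exp (-(2 * ρ * |x|)) * Real.exp (-(2 * ρ * |y|)) := by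
  have hRpos : (0:ℝ) < Real.exp (-(2 * ρ * |x|)) * Real.exp (-(2 * ρ * |y|)) := by positivity
  by_cases hx : x ≤ T
  · by_cases hy : y ≤ T
    · -- at least one of x, y is negative
      have hneg : x < 0 ∨ y < 0 := by
        by_contra hc
        push_neg at hc
        exact h ⟨⟨hc.1, hx⟩, ⟨hc.2, hy⟩⟩
      by_cases hm : max x y ≤ 0
      · -- both nonpositive
        have hx0 : x ≤ 0 := le_trans (le_max_left x y) hm
        have hy0 : y ≤ 0 := le_trans (le_max_right x y) hm
        have hval : ouKernel ρ T x y = Real.exp (ρ * (x + y)) * (1 - Real.exp (-2 * ρ * T)) := by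
          simp [ouKernel, hx, hy, hm, not_lt.2 hm]
        have h01 : 0 ≤ 1 - Real.exp (-2 * ρ * T) := by
          have : Real.exp (-2 * ρ * T) ≤ 1 := by
            rw [← Real.exp_zero]
            apply Real.exp_le_exp.2; nlinarith
          linarith
        have hle1 : 1 - Real.exp (-2 * ρ * T) ≤ 1 := by
          have := Real.exp_pos (-2 * ρ * T); linarith
        have hK0 : 0 ≤ ouKernel ρ T x y := by
          rw [hval]; positivity
        have hKle : ouKernel ρ T x y ≤ Real.exp (ρ * (x + y)) := by
          rw [hval]
          nlinarith [Real.exp_pos (ρ * (x + y))]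
        calc (ouKernel ρ T x y) ^ 2 ≤ (Real.exp (ρ * (x + y))) ^ 2 := by
              exact pow_le_pow_left₀ hK0 hKle 2
          _ = Real.exp (-(2 * ρ * |x|)) * Real.exp (-(2 * ρ * |y|)) := by
              rw [← Real.exp_add, sq, ← Real.exp_add, abs_of_nonpos hx0, abs_of_nonpos hy0]
              ring_nf
      · -- max > 0
        push_neg at hm
        set m := max x y with hmdef
        have hmT : m ≤ T := max_le hx hy
        have hA0 : 0 ≤ Real.exp (-2 * ρ * m) - Real.exp (-2 * ρ * T) := by
          have : Real.exp (-2 * ρ * T) ≤ Real.exp (-2 * ρ * m) :=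
            Real.exp_le_exp.2 (by nlinarith)
          linarith
        have hval : ouKernel ρ T x y =
            Real.exp (ρ * (x + y)) * (Real.exp (-2 * ρ * m) - Real.exp (-2 * ρ * T)) := by
          simp [ouKernel, hx, hy, not_le.2 hm, hm, ← hmdef]
        have hK0 : 0 ≤ ouKernel ρ T x y := by
          rw [hval]; positivity
        have hKle : ouKernel ρ T x y ≤ Real.exp (ρ * (x + y) + -2 * ρ * m) := by
          rw [hval, Real.exp_add]
          nlinarith [Real.exp_pos (ρ * (x + y)), Real.exp_pos (-2 * ρ * T),
            Real.exp_pos (-2 * ρ * m)]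
        have hexp : Real.exp (ρ * (x + y) + -2 * ρ * m) ^ 2 ≤
            Real.exp (-(2 * ρ * |x|)) * Real.exp (-(2 * ρ * |y|)) := by
          rw [sq, ← Real.exp_add, ← Real.exp_add]
          apply Real.exp_le_exp.2
          rcases le_total x y with hxy | hxy
          · have hmy : m = y := max_eq_right hxy
            have hy0 : 0 < y := by rw [← hmy]; exact hm
            have hx0 : x < 0 := by
              rcases hneg with h1 | h1
              · exact h1
              · exact absurd h1 (not_lt.2 hy0.le)
            rw [abs_of_nonpos hx0.le, abs_of_pos hy0, hmy]
            nlinarith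
          · have hmx : m = x := max_eq_left hxy
            have hx0 : 0 < x := by rw [← hmx]; exact hm
            have hy0 : y < 0 := by
              rcases hneg with h1 | h1
              · exact absurd h1 (not_lt.2 hx0.le)
              · exact h1
            rw [abs_of_pos hx0, abs_of_nonpos hy0.le, hmx]
            nlinarith
        calc (ouKernel ρ T x y) ^ 2 ≤ (Real.exp (ρ * (x + y) + -2 * ρ * m)) ^ 2 :=
              pow_le_pow_left₀ hK0 hKle 2
          _ ≤ _ := hexp
    · have : ouKernel ρ T x y = 0 := by simp [ouKernel, hy]
      rw [this]; norm_num; positivity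
  · have : ouKernel ρ T x y = 0 := by simp [ouKernel, hx]
    rw [this]; norm_num; positivity

/-- Lintegral of a decaying exponential on the positive half-line. -/
lemma lintegral_exp_Ioi (c : ℝ) (hc : 0 < c) :
    ∫⁻ x in Set.Ioi (0:ℝ), ENNReal.ofReal (Real.exp (-(c * x))) = ENNReal.ofReal (1 / c) := by
  have hint : IntegrableOn (fun x => Real.exp (-(c * x))) (Set.Ioi (0:ℝ)) := by
    simpa [neg_mul] using exp_neg_integrableOn_Ioi 0 hc
  rw [← ofReal_integral_eq_lintegral_ofReal hint
    (Filter.Eventually.of_forall fun x => (Real.exp_pos _).le)]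
  congr 1
  have h := MeasureTheory.integral_comp_mul_left_Ioi (fun x => Real.exp (-x)) 0 hc
  simp only [mul_zero] at h
  rw [h, integral_exp_neg_Ioi_zero]
  rw [smul_eq_mul, mul_one, inv_eq_one_div]

/-- Lintegral of `exp (-(c * |x|))` over the real line. -/
lemma lintegral_exp_abs (c : ℝ) (hc : 0 < c) :
    ∫⁻ x : ℝ, ENNReal.ofReal (Real.exp (-(c * |x|))) = ENNReal.ofReal (2 / c) := by
  have hmeas : Measurable fun x : ℝ => ENNReal.ofReal (Real.exp (-(c * |x|))) :=
    ((measurable_abs.const_mul c).neg.exp).ennreal_ofReal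
  have hsplit : ∫⁻ x : ℝ, ENNReal.ofReal (Real.exp (-(c * |x|)))
      = (∫⁻ x in Set.Ioi (0:ℝ), ENNReal.ofReal (Real.exp (-(c * |x|))))
        + ∫⁻ x in Set.Iic (0:ℝ), ENNReal.ofReal (Real.exp (-(c * |x|))) := by
    rw [← lintegral_add_compl _ (measurableSet_Ioi (a := (0:ℝ)))]
    congr 1
    rw [Set.compl_Ioi]
  have h1 : (∫⁻ x in Set.Ioi (0:ℝ), ENNReal.ofReal (Real.exp (-(c * |x|))))
      = ENNReal.ofReal (1 / c) := by
    rw [setLIntegral_congr_fun (measurableSet_Ioi)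
      (fun x (hx : 0 < x) => by rw [abs_of_pos hx])]
    exact lintegral_exp_Ioi c hc
  have h2 : (∫⁻ x in Set.Iic (0:ℝ), ENNReal.ofReal (Real.exp (-(c * |x|))))
      = ENNReal.ofReal (1 / c) := by
    have hmp : MeasurePreserving (fun x : ℝ => -x) volume volume :=
      Measure.measurePreserving_neg _
    have : ∫⁻ x in Set.Iic (0:ℝ), ENNReal.ofReal (Real.exp (-(c * |x|)))
        = ∫⁻ x in Set.Ici (0:ℝ), ENNReal.ofReal (Real.exp (-(c * |x|))) := by
      rw [← lintegral_indicator measurableSet_Iic, ← lintegral_indicator measurableSet_Ici]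
      rw [← hmp.lintegral_comp (hmeas.indicator measurableSet_Iic)]
      congr 1
      ext x
      by_cases hx : x ∈ Set.Ici (0:ℝ)
      · have hx' : -x ∈ Set.Iic (0:ℝ) := by simpa using hx
        rw [Set.indicator_of_mem hx', Set.indicator_of_mem hx, abs_neg]
      · have hx' : -x ∉ Set.Iic (0:ℝ) := by simpa using hx
        rw [Set.indicator_of_notMem hx', Set.indicator_of_notMem hx]
    rw [this, ← h1]
    refine Eq.symm (setLIntegral_congr ?_)
    exact Ioi_ae_eq_Ici
  rw [hsplit, h1, h2, ← ENNReal.ofReal_add (by positivity) (by positivity)]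
  congr 1
  ring

/-- `∫_{ℝ² ∖ [0,T]²} f₂(x₁,x₂)² dx₁ dx₂ ≤ 1/ρ²`. -/
theorem stmt_13 (ρ T : ℝ) (hρ : 0 < ρ) (hT : 0 < T) :
    (∫⁻ p : ℝ × ℝ in (Set.Icc (0 : ℝ) T ×ˢ Set.Icc (0 : ℝ) T)ᶜ,
        ENNReal.ofReal ((ouKernel ρ T p.1 p.2) ^ 2)) ≤
      ENNReal.ofReal (1 / ρ ^ 2) := by
  have hstep1 : (∫⁻ p : ℝ × ℝ in (Set.Icc (0 : ℝ) T ×ˢ Set.Icc (0 : ℝ) T)ᶜ,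
      ENNReal.ofReal ((ouKernel ρ T p.1 p.2) ^ 2))
      ≤ ∫⁻ p : ℝ × ℝ,
          ENNReal.ofReal (Real.exp (-(2 * ρ * |p.1|)) * Real.exp (-(2 * ρ * |p.2|))) := by
    refine le_trans (setLIntegral_mono'
      (MeasurableSet.compl (measurableSet_Icc.prod measurableSet_Icc)) ?_)
      (setLIntegral_le_lintegral _ _)
    intro p hp
    apply ENNReal.ofReal_le_ofReal
    exact ouKernel_sq_le ρ T p.1 p.2 hρ hT fun hmem => hp (Set.mem_prod.mpr hmem)
  refine le_trans hstep1 ?_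
  have hprod : ∫⁻ p : ℝ × ℝ,
      ENNReal.ofReal (Real.exp (-(2 * ρ * |p.1|)) * Real.exp (-(2 * ρ * |p.2|)))
      = ENNReal.ofReal (1 / ρ) * ENNReal.ofReal (1 / ρ) := by
    have heq : ∀ p : ℝ × ℝ,
        ENNReal.ofReal (Real.exp (-(2 * ρ * |p.1|)) * Real.exp (-(2 * ρ * |p.2|)))
        = ENNReal.ofReal (Real.exp (-(2 * ρ * |p.1|)))
          * ENNReal.ofReal (Real.exp (-(2 * ρ * |p.2|))) := fun p =>
      ENNReal.ofReal_mul (Real.exp_pos _).le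
    have hg : Measurable fun x : ℝ => ENNReal.ofReal (Real.exp (-(2 * ρ * |x|))) :=
      ((measurable_abs.const_mul (2 * ρ)).neg.exp).ennreal_ofReal
    simp_rw [heq]
    rw [Measure.volume_eq_prod, lintegral_prod_mul hg.aemeasurable hg.aemeasurable,
      lintegral_exp_abs _ (by positivity)]
    have h2ρ : 2 / (2 * ρ) = 1 / ρ := by field_simp
    rw [h2ρ]
  rw [hprod, ← ENNReal.ofReal_mul (by positivity)]
  apply ENNReal.ofReal_le_ofReal
  rw [div_mul_div_comm, one_mul, sq]
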